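/- arXiv:1803.03868 — 2 statements merged into one kernel-verified Lean document; each statement's English description precedes it below -/
import Mathlib

section
/- For all i ≥ 1 and all y > 0: if ‖ ∑_{k≤i} ∑_{l≤i} (λ_k + y − λ_i)^{−1/2} (λ_l + y − λ_i)^{−1/2} P_k E P_l ‖∞² ≤ 1, then λ̂_i − λ_i ≥ −y. -/
open scoped BigOperators RealInnerProductSpace
open Filter

noncomputable def rankOne {H : Type*} [NormedAddCommGroup H] [InnerProductSpace ℝ H]
    (v : H) : H →L[ℝ] H := (innerSL ℝ v).smulRight v

set_option maxHeartbeats 1000000 in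
/-- **Proposition 10 of Jirak–Wahl, Eq. (18).** For all `i` and `y > 0`: if
`‖∑_{k≤i} ∑_{l≤i} (λ_k+y−λ_i)^{-1/2} (λ_l+y−λ_i)^{-1/2} P_k E P_l‖∞² ≤ 1`, then
`λ̂_i − λ_i ≥ −y`. -/
theorem stmt15
    {H : Type*} [NormedAddCommGroup H] [InnerProductSpace ℝ H] [CompleteSpace H]
    (u uh : HilbertBasis ℕ ℝ H)
    (lam lamh : ℕ → ℝ)
    (hlam_pos : ∀ i, 0 < lam i)
    (hlam_anti : ∀ i j, i ≤ j → lam j ≤ lam i)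
    (hlam_to0 : Tendsto lam atTop (nhds 0))
    (hlamh_nonneg : ∀ i, 0 ≤ lamh i)
    (hlamh_anti : ∀ i j, i ≤ j → lamh j ≤ lamh i)
    (hlamh_to0 : Tendsto lamh atTop (nhds 0))
    (T Th : H →L[ℝ] H)
    (hTsa : IsSelfAdjoint T) (hThsa : IsSelfAdjoint Th)
    (hT : ∀ i, T (u i) = lam i • u i)
    (hTh : ∀ i, Th (uh i) = lamh i • uh i)
    (i : ℕ) (y : ℝ) (hy : 0 < y)
    (hnorm : ‖∑ k ∈ Finset.range (i + 1), ∑ l ∈ Finset.range (i + 1),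
        ((Real.sqrt (lam k + y - lam i))⁻¹ * (Real.sqrt (lam l + y - lam i))⁻¹) •
          (rankOne (u k) ∘L (Th - T) ∘L rankOne (u l))‖ ^ 2 ≤ 1) :
    -y ≤ lamh i - lam i := by
  classical
  have hon := u.orthonormal
  have hspos : ∀ k, k ≤ i → 0 < lam k + y - lam i := fun k hk => by
    have := hlam_anti k i hk; linarith
  set M : H →L[ℝ] H := ∑ k ∈ Finset.range (i + 1), ∑ l ∈ Finset.range (i + 1),
      ((Real.sqrt (lam k + y - lam i))⁻¹ * (Real.sqrt (lam l + y - lam i))⁻¹) •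
        (rankOne (u k) ∘L (Th - T) ∘L rankOne (u l)) with hMdef
  have hM1 : ‖M‖ ≤ 1 := by nlinarith [norm_nonneg M]
  -- the finite-dimensional subspace spanned by `u 0, …, u i`
  set v : Fin (i + 1) → H := fun k => u k with hv
  have honv : Orthonormal ℝ v := hon.comp (fun j : Fin (i + 1) => (j : ℕ)) Fin.val_injective
  have hli := honv.linearIndependent
  set V : Submodule ℝ H := Submodule.span ℝ (Set.range v) with hV
  have hfd : FiniteDimensional ℝ V := FiniteDimensional.span_of_finite ℝ (Set.finite_range v)
  have hdim : Module.finrank ℝ V = i + 1 := by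
    rw [hV, finrank_span_eq_card hli, Fintype.card_fin]
  -- find a nonzero vector of `V` orthogonal to `uh 0, …, uh (i-1)`
  set φ : H →ₗ[ℝ] (Fin i → ℝ) :=
    LinearMap.pi (fun j : Fin i => ((innerSL ℝ (uh j)) : H →ₗ[ℝ] ℝ)) with hφ
  have hninj : ¬ Function.Injective (φ.comp V.subtype) := by
    intro hinj
    have := LinearMap.finrank_le_finrank_of_injective hinj
    rw [hdim, Module.finrank_fintype_fun_eq_card, Fintype.card_fin] at this
    omega
  rw [Function.not_injective_iff] at hninj
  obtain ⟨p, q, hpq, hne⟩ := hninj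
  set x : H := (p : H) - (q : H) with hx
  have hxV : x ∈ V := sub_mem p.2 q.2
  have hxne : x ≠ 0 := sub_ne_zero.mpr fun h => hne (Subtype.ext h)
  have hφx : φ x = 0 := by
    have : φ.comp V.subtype p - φ.comp V.subtype q = 0 := by rw [hpq]; simp
    rw [← map_sub] at this
    simpa [hx] using this
  have hxorth : ∀ j : ℕ, j < i → ⟪uh j, x⟫ = 0 := by
    intro j hj
    have := congrFun hφx ⟨j, hj⟩
    simpa [hφ] using this
  -- coefficients of x in the u-basis
  have hxspan : x ∈ Submodule.span ℝ (Set.range v) := hxV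
  rw [Submodule.mem_span_range_iff_exists_fun] at hxspan
  obtain ⟨c, hc⟩ := hxspan
  set b : ℕ → ℝ := fun m => if h : m < i + 1 then c ⟨m, h⟩ else 0 with hb
  have hxe : x = ∑ m ∈ Finset.range (i + 1), b m • u m := by
    rw [← hc, ← Fin.sum_univ_eq_sum_range (fun m => b m • u m) (i + 1)]
    refine Finset.sum_congr rfl fun j _ => ?_
    simp [hb, hv, j.isLt, not_lt.mpr (Nat.lt_succ_iff.mp j.isLt)]
  have hnx : ‖x‖ ^ 2 = ∑ m ∈ Finset.range (i + 1), b m ^ 2 := by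
    rw [← real_inner_self_eq_norm_sq]
    conv_lhs => rw [hxe]
    rw [hon.inner_sum]
    exact Finset.sum_congr rfl fun m _ => by simp [sq]
  have hTx : ⟪T x, x⟫ = ∑ m ∈ Finset.range (i + 1), lam m * b m ^ 2 := by
    have h1 : T x = ∑ m ∈ Finset.range (i + 1), (lam m * b m) • u m := by
      rw [hxe, map_sum]
      exact Finset.sum_congr rfl fun m _ => by rw [map_smul, hT, smul_smul, mul_comm]
    rw [h1]
    conv_lhs => rw [hxe]
    rw [hon.inner_sum]
    exact Finset.sum_congr rfl fun m _ => by simp [sq]; ring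
  have hEx' : ⟪(Th - T) x, x⟫ = ∑ l ∈ Finset.range (i + 1), ∑ k ∈ Finset.range (i + 1),
      b l * (b k * ⟪u k, (Th - T) (u l)⟫) := by
    conv_lhs => rw [hxe]
    rw [map_sum, sum_inner]
    refine Finset.sum_congr rfl fun l _ => ?_
    rw [map_smul, real_inner_smul_left, inner_sum, Finset.mul_sum]
    refine Finset.sum_congr rfl fun k _ => ?_
    rw [real_inner_smul_right, real_inner_comm ((Th - T) (u l)) (u k)]
  have hEx : ⟪(Th - T) x, x⟫ = ∑ k ∈ Finset.range (i + 1), ∑ l ∈ Finset.range (i + 1),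
      b k * b l * ⟪u k, (Th - T) (u l)⟫ := by
    rw [hEx', Finset.sum_comm]
    exact Finset.sum_congr rfl fun k _ => Finset.sum_congr rfl fun l _ => by ring
  -- the auxiliary vector z
  set b2 : ℕ → ℝ := fun m => b m * Real.sqrt (lam m + y - lam i) with hb2
  set z : H := ∑ m ∈ Finset.range (i + 1), b2 m • u m with hz
  have hnz : ‖z‖ ^ 2 = ∑ m ∈ Finset.range (i + 1), (lam m + y - lam i) * b m ^ 2 := by
    rw [← real_inner_self_eq_norm_sq, hz, hon.inner_sum]
    refine Finset.sum_congr rfl fun m hm => ?_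
    have hmle : m ≤ i := Nat.lt_succ_iff.mp (Finset.mem_range.mp hm)
    have h2 : Real.sqrt (lam m + y - lam i) ^ 2 = lam m + y - lam i :=
      Real.sq_sqrt (hspos m hmle).le
    simp only [hb2, conj_trivial]
    linear_combination (b m) ^ 2 * h2
  have hMzz : ⟪M z, z⟫ = ∑ k ∈ Finset.range (i + 1), ∑ l ∈ Finset.range (i + 1),
      b k * b l * ⟪u k, (Th - T) (u l)⟫ := by
    rw [hMdef, ContinuousLinearMap.sum_apply, sum_inner]
    refine Finset.sum_congr rfl fun k hk => ?_
    rw [ContinuousLinearMap.sum_apply, sum_inner]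
    refine Finset.sum_congr rfl fun l hl => ?_
    have hk' : k ≤ i := Nat.lt_succ_iff.mp (Finset.mem_range.mp hk)
    have hl' : l ≤ i := Nat.lt_succ_iff.mp (Finset.mem_range.mp hl)
    have hulz : ⟪u l, z⟫ = b2 l := by
      rw [hz]; exact hon.inner_right_sum b2 (Finset.mem_range.mpr (Nat.lt_succ_of_le hl'))
    have hukz : ⟪u k, z⟫ = b2 k := by
      rw [hz]; exact hon.inner_right_sum b2 (Finset.mem_range.mpr (Nat.lt_succ_of_le hk'))
    have hsk : Real.sqrt (lam k + y - lam i) ≠ 0 := ne_of_gt (Real.sqrt_pos.mpr (hspos k hk'))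
    have hsl : Real.sqrt (lam l + y - lam i) ≠ 0 := ne_of_gt (Real.sqrt_pos.mpr (hspos l hl'))
    simp only [ContinuousLinearMap.smul_apply, ContinuousLinearMap.comp_apply, rankOne,
      ContinuousLinearMap.smulRight_apply, innerSL_apply_apply, map_smul, inner_smul_left,
      inner_smul_right, smul_smul, conj_trivial, smul_eq_mul, real_inner_smul_left]
    rw [hulz, hukz]
    simp only [hb2]
    field_simp
  -- lower bound for ⟪Th x, x⟫
  have habs : |⟪M z, z⟫| ≤ ‖z‖ ^ 2 := by
    calc |⟪M z, z⟫| ≤ ‖M z‖ * ‖z‖ := abs_real_inner_le_norm _ _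
      _ ≤ (‖M‖ * ‖z‖) * ‖z‖ := by
          have := M.le_opNorm z
          nlinarith [norm_nonneg z]
      _ ≤ ‖z‖ ^ 2 := by nlinarith [norm_nonneg z, norm_nonneg M]
  have key1 : (lam i - y) * ‖x‖ ^ 2 ≤ ⟪Th x, x⟫ := by
    have h1 : ⟪Th x, x⟫ = ⟪T x, x⟫ + ⟪(Th - T) x, x⟫ := by
      rw [ContinuousLinearMap.sub_apply, inner_sub_left]; ring
    have h2 : ⟪(Th - T) x, x⟫ ≥ -(‖z‖ ^ 2) := by
      rw [hEx, ← hMzz]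
      have := abs_le.mp habs
      linarith [this.1]
    have h3 : (lam i - y) * ‖x‖ ^ 2 =
        (∑ m ∈ Finset.range (i + 1), lam m * b m ^ 2) -
          ∑ m ∈ Finset.range (i + 1), (lam m + y - lam i) * b m ^ 2 := by
      rw [hnx, Finset.mul_sum, ← Finset.sum_sub_distrib]
      exact Finset.sum_congr rfl fun m _ => by ring
    linarith [hTx, hnz, h1, h2, h3]
  -- upper bound for ⟪Th x, x⟫
  have hg : ∀ j, ⟪Th x, uh j⟫ * ⟪uh j, x⟫ = lamh j * ⟪uh j, x⟫ ^ 2 := by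
    intro j
    have hsymm := (ContinuousLinearMap.isSelfAdjoint_iff_isSymmetric.mp hThsa) x (uh j)
    simp only [ContinuousLinearMap.coe_coe] at hsymm
    rw [hsymm, hTh, inner_smul_right, real_inner_comm x (uh j)]
    ring
  have hg2 : ∀ j, ⟪x, uh j⟫ * ⟪uh j, x⟫ = ⟪uh j, x⟫ ^ 2 := fun j => by
    rw [real_inner_comm x (uh j)]; ring
  have key2 : ⟪Th x, x⟫ ≤ lamh i * ‖x‖ ^ 2 := by
    have h1 : ⟪Th x, x⟫ = ∑' j, lamh j * ⟪uh j, x⟫ ^ 2 := by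
      rw [← uh.tsum_inner_mul_inner (Th x) x]
      exact tsum_congr fun j => hg j
    have h2 : ‖x‖ ^ 2 = ∑' j, ⟪uh j, x⟫ ^ 2 := by
      rw [← real_inner_self_eq_norm_sq, ← uh.tsum_inner_mul_inner x x]
      exact tsum_congr fun j => hg2 j
    have hsum1 : Summable (fun j => lamh j * ⟪uh j, x⟫ ^ 2) := by
      have := uh.summable_inner_mul_inner (Th x) x
      simpa only [hg] using this
    have hsum0 : Summable (fun j => ⟪uh j, x⟫ ^ 2) := by
      have := uh.summable_inner_mul_inner x x
      simpa only [hg2] using this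
    have hsum2 : Summable (fun j => lamh i * ⟪uh j, x⟫ ^ 2) := hsum0.mul_left _
    have hle : ∀ j, lamh j * ⟪uh j, x⟫ ^ 2 ≤ lamh i * ⟪uh j, x⟫ ^ 2 := by
      intro j
      rcases lt_or_ge j i with hj | hj
      · rw [hxorth j hj]; simp
      · exact mul_le_mul_of_nonneg_right (hlamh_anti i j hj) (sq_nonneg _)
    calc ⟪Th x, x⟫ = ∑' j, lamh j * ⟪uh j, x⟫ ^ 2 := h1
      _ ≤ ∑' j, lamh i * ⟪uh j, x⟫ ^ 2 := Summable.tsum_le_tsum hle hsum1 hsum2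
      _ = lamh i * ‖x‖ ^ 2 := by rw [h2, tsum_mul_left]
  have hxpos : 0 < ‖x‖ ^ 2 := pow_pos (norm_pos_iff.mpr hxne) 2
  nlinarith [key1, key2, hxpos]
end

section
/- Suppose sup_{j≥1} E|η_j|⁴ ≤ C_η for a constant C_η > 0. Then for any subsets I, J ⊆ ℕ, there is a constant C₂ > 0 depending only on C_η such that ( E ‖P_I E P_J‖₂ )² ≤ (C₂ / n) ∑_{i∈I} ∑_{j∈J} λ_i λ_j. -/
open scoped BigOperators RealInnerProductSpace ENNReal
open Filter MeasureTheory ProbabilityTheory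

noncomputable def hsNormSq {H : Type*} [NormedAddCommGroup H] [InnerProductSpace ℝ H]
    (u : ℕ → H) (T : H →L[ℝ] H) : ℝ := ∑' i, ‖T (u i)‖ ^ 2

noncomputable def hsNorm {H : Type*} [NormedAddCommGroup H] [InnerProductSpace ℝ H]
    (u : ℕ → H) (T : H →L[ℝ] H) : ℝ := Real.sqrt (hsNormSq u T)

/-- orthogonal projection onto the closed span of `{u i : i ∈ S}`, as an operator on `H` -/
noncomputable def projSet {H : Type*} [NormedAddCommGroup H] [InnerProductSpace ℝ H]
    [CompleteSpace H] (u : ℕ → H) (S : Set ℕ) : H →L[ℝ] H :=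
  haveI : CompleteSpace ((Submodule.span ℝ (u '' S)).topologicalClosure) :=
    (Submodule.isClosed_topologicalClosure _).completeSpace_coe
  ((Submodule.span ℝ (u '' S)).topologicalClosure).subtypeL ∘L
    Submodule.orthogonalProjectionOnto ((Submodule.span ℝ (u '' S)).topologicalClosure)

section aux
variable {H : Type*} [NormedAddCommGroup H] [InnerProductSpace ℝ H] [CompleteSpace H]

lemma ofReal_tsum_le {f : ℕ → ℝ} (hf : ∀ n, 0 ≤ f n) :
    ENNReal.ofReal (∑' n, f n) ≤ ∑' n, ENNReal.ofReal (f n) := by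
  by_cases h : Summable f
  · exact le_of_eq (ENNReal.ofReal_tsum_of_nonneg hf h)
  · rw [tsum_eq_zero_of_not_summable h]; simp

lemma projSet_apply_of_mem (u : HilbertBasis ℕ ℝ H) {S : Set ℕ} {k : ℕ} (hk : k ∈ S) :
    projSet (⇑u) S (u k) = u k := by
  have : (u k : H) ∈ (Submodule.span ℝ (⇑u '' S)).topologicalClosure :=
    (Submodule.span ℝ (⇑u '' S)).le_topologicalClosure
      (Submodule.subset_span ⟨k, hk, rfl⟩)
  exact Submodule.starProjection_eq_self_iff.mpr this

lemma projSet_apply_of_not_mem (u : HilbertBasis ℕ ℝ H) {S : Set ℕ} {k : ℕ} (hk : k ∉ S) :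
    projSet (⇑u) S (u k) = 0 := by
  have horth : (u k : H) ∈ (Submodule.span ℝ (⇑u '' S)).topologicalClosureᗮ := by
    rw [← Submodule.orthogonal_orthogonal_eq_closure]
    apply Submodule.le_orthogonal_orthogonal
    rw [Submodule.mem_orthogonal']
    intro w hw
    induction hw using Submodule.span_induction with
    | mem x hx =>
        obtain ⟨j, hj, rfl⟩ := hx
        exact u.orthonormal.2 (fun h => hk (h ▸ hj))
    | zero => simp
    | add x y _ _ hx hy => simp [inner_add_right, hx, hy]
    | smul c x _ hx => simp [inner_smul_right, hx]
  simp [projSet, Submodule.orthogonalProjectionOnto_apply_of_mem_orthogonal horth]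

lemma inner_projSet (u : HilbertBasis ℕ ℝ H) (S : Set ℕ) (i : ℕ) (y : H) :
    ⟪(u i : H), projSet (⇑u) S y⟫ = S.indicator (fun i => ⟪(u i : H), y⟫) i := by
  have h1 : ⟪(u i : H), projSet (⇑u) S y⟫ = ⟪projSet (⇑u) S (u i), y⟫ := by
    simp only [projSet, ContinuousLinearMap.coe_comp', Function.comp_apply,
      Submodule.subtypeL_apply]
    exact (Submodule.inner_starProjection_left_eq_right (Submodule.span ℝ (⇑u '' S)).topologicalClosure (u i) y).symm
  rw [h1]
  by_cases hi : i ∈ S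
  · rw [projSet_apply_of_mem u hi, Set.indicator_of_mem hi]
  · rw [projSet_apply_of_not_mem u hi, Set.indicator_of_notMem hi, inner_zero_left]

lemma norm_sq_projSet (u : HilbertBasis ℕ ℝ H) (S : Set ℕ) (y : H) :
    ‖projSet (⇑u) S y‖ ^ 2 = ∑' i, S.indicator (fun i => ⟪(u i : H), y⟫ ^ 2) i := by
  have hparseval : ∀ z : H, ‖z‖ ^ 2 = ∑' i, ⟪(u i : H), z⟫ ^ 2 := by
    intro z
    have := u.tsum_inner_mul_inner z z
    rw [real_inner_self_eq_norm_sq] at this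
    rw [← this]
    congr 1; ext i; rw [real_inner_comm z (u i)]; ring
  rw [hparseval]
  congr 1; ext i
  rw [inner_projSet]
  by_cases hi : i ∈ S
  · simp [Set.indicator_of_mem hi]
  · simp [Set.indicator_of_notMem hi]

end aux

lemma key_var_bound {Ω : Type*} [MeasurableSpace Ω] {P : Measure Ω} [IsProbabilityMeasure P]
    {n : ℕ} (hn : 0 < n) {v : ℝ} {Z : Fin n → Ω → ℝ}
    (hmem : ∀ l, MemLp (Z l) 2 P) (hmean : ∀ l, ∫ ω, Z l ω ∂P = 0)
    (hvar : ∀ l, ∫ ω, (Z l ω) ^ 2 ∂P ≤ v)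
    (hindep : ∀ l l', l ≠ l' → IndepFun (Z l) (Z l') P) :
    ∫ ω, ((n : ℝ)⁻¹ * ∑ l, Z l ω) ^ 2 ∂P ≤ v / n := by
  set W : Ω → ℝ := fun ω => ∑ l, Z l ω with hW
  have hW2 : MemLp W 2 P := by
    have h := memLp_finset_sum' (μ := P) Finset.univ (fun l (_ : l ∈ Finset.univ) => hmem l)
    have : W = ∑ i : Fin n, Z i := by ext ω; simp [hW]
    rw [this]; exact h
  have hWmean : ∫ ω, W ω ∂P = 0 := by
    rw [integral_finset_sum _ (fun l _ => (hmem l).integrable one_le_two)]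
    simp [hmean]
  have hvarsum : variance W P = ∑ l, variance (Z l) P := by
    have h := IndepFun.variance_sum (μ := P) (X := Z) (s := Finset.univ)
      (fun l _ => hmem l) (fun l _ l' _ hll' => hindep l l' hll')
    have hWe : W = ∑ i : Fin n, Z i := by ext ω; simp [hW]
    rw [hWe]; exact h
  have hWsq : ∫ ω, (W ω) ^ 2 ∂P = variance W P := by
    have := variance_eq_sub hW2
    simp only [Pi.pow_apply] at this
    rw [this, hWmean]
    simp
  have hZvar : ∀ l, variance (Z l) P ≤ v := by
    intro l
    have := variance_eq_sub (hmem l)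
    simp only [Pi.pow_apply] at this
    rw [this, hmean l]
    simpa using hvar l
  have hWsq_le : ∫ ω, (W ω) ^ 2 ∂P ≤ n * v := by
    rw [hWsq, hvarsum]
    calc ∑ l, variance (Z l) P ≤ ∑ _l : Fin n, v := Finset.sum_le_sum fun l _ => hZvar l
      _ = n * v := by simp [mul_comm]
  have hconst : ∀ ω, ((n : ℝ)⁻¹ * ∑ l, Z l ω) ^ 2 = ((n : ℝ)⁻¹) ^ 2 * (W ω) ^ 2 := by
    intro ω; rw [mul_pow]
  calc ∫ ω, ((n : ℝ)⁻¹ * ∑ l, Z l ω) ^ 2 ∂P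
      = ((n : ℝ)⁻¹) ^ 2 * ∫ ω, (W ω) ^ 2 ∂P := by
        simp_rw [hconst]; exact MeasureTheory.integral_const_mul _ _
    _ ≤ ((n : ℝ)⁻¹) ^ 2 * (n * v) := by
        apply mul_le_mul_of_nonneg_left hWsq_le (by positivity)
    _ = v / n := by
        have hn' : (n : ℝ) ≠ 0 := Nat.cast_ne_zero.mpr hn.ne'
        field_simp

lemma fourth_moment_from_lintegral {Ω : Type*} [MeasurableSpace Ω] {P : Measure Ω}
    [IsProbabilityMeasure P] {f : Ω → ℝ} (hm : Measurable f) {lam Cη : ℝ}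
    (hlam : 0 < lam) (hCη : 0 ≤ Cη)
    (h : ∫⁻ ω, ENNReal.ofReal (|(Real.sqrt lam)⁻¹ * f ω| ^ 4) ∂P ≤ ENNReal.ofReal Cη) :
    Integrable (fun ω => f ω ^ 4) P ∧ ∫ ω, f ω ^ 4 ∂P ≤ lam ^ 2 * Cη := by
  have hsq : Real.sqrt lam ^ 2 = lam := Real.sq_sqrt hlam.le
  have hpt : ∀ ω, |(Real.sqrt lam)⁻¹ * f ω| ^ 4 = (lam ^ 2)⁻¹ * f ω ^ 4 := by
    intro ω
    have h1 : |(Real.sqrt lam)⁻¹ * f ω| ^ 4 = ((Real.sqrt lam)⁻¹ * f ω) ^ 4 := by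
      rw [pow_abs, abs_of_nonneg (by positivity)]
    rw [h1, mul_pow, inv_pow]
    congr 2
    nlinarith [hsq]
  have hlint : ∫⁻ ω, ENNReal.ofReal (f ω ^ 4) ∂P ≤ ENNReal.ofReal (lam ^ 2 * Cη) := by
    have heq : ∀ ω, ENNReal.ofReal (f ω ^ 4)
        = ENNReal.ofReal (lam ^ 2) * ENNReal.ofReal ((lam ^ 2)⁻¹ * f ω ^ 4) := by
      intro ω
      rw [← ENNReal.ofReal_mul (by positivity)]
      congr 1
      field_simp
    calc ∫⁻ ω, ENNReal.ofReal (f ω ^ 4) ∂P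
        = ENNReal.ofReal (lam ^ 2) * ∫⁻ ω, ENNReal.ofReal ((lam ^ 2)⁻¹ * f ω ^ 4) ∂P := by
          simp_rw [heq]
          exact lintegral_const_mul _ (by
            exact ENNReal.measurable_ofReal.comp ((hm.pow_const 4).const_mul _))
      _ ≤ ENNReal.ofReal (lam ^ 2) * ENNReal.ofReal Cη := by
          gcongr
          calc ∫⁻ ω, ENNReal.ofReal ((lam ^ 2)⁻¹ * f ω ^ 4) ∂P
              = ∫⁻ ω, ENNReal.ofReal (|(Real.sqrt lam)⁻¹ * f ω| ^ 4) ∂P := by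
                congr 1; ext ω; rw [hpt ω]
            _ ≤ ENNReal.ofReal Cη := h
      _ = ENNReal.ofReal (lam ^ 2 * Cη) := (ENNReal.ofReal_mul (by positivity)).symm
  have hintg : Integrable (fun ω => f ω ^ 4) P := by
    refine ⟨(hm.pow_const 4).aestronglyMeasurable, ?_⟩
    rw [hasFiniteIntegral_iff_ofReal (Filter.Eventually.of_forall fun ω => by positivity)]
    exact lt_of_le_of_lt hlint ENNReal.ofReal_lt_top
  refine ⟨hintg, ?_⟩
  have := ofReal_integral_eq_lintegral_ofReal hintg
    (Filter.Eventually.of_forall fun ω => by positivity)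
  rw [← ENNReal.ofReal_le_ofReal_iff (by positivity), this]
  exact hlint

lemma prod_sq_bound {Ω : Type*} [MeasurableSpace Ω] {P : Measure Ω}
    [IsProbabilityMeasure P] {f g : Ω → ℝ} (hfm : Measurable f) (hgm : Measurable g)
    {li lk Cη : ℝ} (hli : 0 < li) (hlk : 0 < lk)
    (hf4 : Integrable (fun ω => f ω ^ 4) P) (hf4b : ∫ ω, f ω ^ 4 ∂P ≤ li ^ 2 * Cη)
    (hg4 : Integrable (fun ω => g ω ^ 4) P) (hg4b : ∫ ω, g ω ^ 4 ∂P ≤ lk ^ 2 * Cη) :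
    Integrable (fun ω => (f ω * g ω) ^ 2) P ∧
      ∫ ω, (f ω * g ω) ^ 2 ∂P ≤ li * lk * Cη := by
  have hMint : Integrable (fun ω => (lk / li * f ω ^ 4 + li / lk * g ω ^ 4) / 2) P :=
    ((hf4.const_mul _).add (hg4.const_mul _)).div_const _
  have hpt : ∀ ω, (f ω * g ω) ^ 2 ≤ (lk / li * f ω ^ 4 + li / lk * g ω ^ 4) / 2 := by
    intro ω
    rw [le_div_iff₀ (by norm_num : (0:ℝ) < 2), div_mul_eq_mul_div, div_mul_eq_mul_div,
      div_add_div _ _ hli.ne' hlk.ne', le_div_iff₀ (mul_pos hli hlk)]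
    nlinarith [sq_nonneg (lk * f ω ^ 2 - li * g ω ^ 2), mul_pos hli hlk]
  have hint : Integrable (fun ω => (f ω * g ω) ^ 2) P := by
    refine Integrable.mono' hMint ((hfm.mul hgm).pow_const 2).aestronglyMeasurable
      (Filter.Eventually.of_forall fun ω => ?_)
    rw [Real.norm_eq_abs, abs_of_nonneg (by positivity)]
    exact hpt ω
  refine ⟨hint, ?_⟩
  calc ∫ ω, (f ω * g ω) ^ 2 ∂P
      ≤ ∫ ω, (lk / li * f ω ^ 4 + li / lk * g ω ^ 4) / 2 ∂P :=
        integral_mono hint hMint hpt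
    _ = (lk / li * ∫ ω, f ω ^ 4 ∂P + li / lk * ∫ ω, g ω ^ 4 ∂P) / 2 := by
        rw [integral_div, integral_add (hf4.const_mul _) (hg4.const_mul _),
          integral_const_mul, integral_const_mul]
    _ ≤ (lk / li * (li ^ 2 * Cη) + li / lk * (lk ^ 2 * Cη)) / 2 := by
        have hCη : 0 ≤ Cη := by
          by_contra hc
          push_neg at hc
          have h1 : (0:ℝ) ≤ ∫ ω, f ω ^ 4 ∂P :=
            integral_nonneg fun ω => by positivity
          nlinarith [pow_pos hli 2]
        gcongr
    _ = li * lk * Cη := by field_simp; ring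

/-- **Expectation bound from the proof of Lemma 7 of Jirak–Wahl:**
`(E ‖P_I E P_J‖₂)² ≤ (C₂/n) ∑_{i∈I} ∑_{j∈J} λ_i λ_j` under a uniform fourth moment
bound on the Karhunen–Loève coefficients. -/
theorem stmt18 (Cη : ℝ) (hCη : 0 < Cη) :
    ∃ C₂ : ℝ, 0 < C₂ ∧
      ∀ (H : Type*) [NormedAddCommGroup H] [InnerProductSpace ℝ H] [CompleteSpace H]
        [MeasurableSpace H] [BorelSpace H]
        (Ω : Type*) (_ : MeasurableSpace Ω) (P : Measure Ω), IsProbabilityMeasure P →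
      ∀ (X : Ω → H), Measurable X → Integrable X P → (∫ ω, X ω ∂P) = 0 →
        Integrable (fun ω => ‖X ω‖ ^ 2) P →
      ∀ (u : HilbertBasis ℕ ℝ H) (lam : ℕ → ℝ),
        (∀ i, 0 < lam i) → (∀ i j, i ≤ j → lam j ≤ lam i) → Summable lam →
        (∀ i j, (∫ ω, ⟪u i, X ω⟫ * ⟪u j, X ω⟫ ∂P) = if i = j then lam i else 0) →
        (∀ j, (∫⁻ ω, ENNReal.ofReal (|(Real.sqrt (lam j))⁻¹ * ⟪u j, X ω⟫| ^ 4) ∂P) ≤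
          ENNReal.ofReal Cη) →
      ∀ (T : H →L[ℝ] H), IsSelfAdjoint T → (∀ i, T (u i) = lam i • u i) →
      ∀ (n : ℕ), 0 < n →
      ∀ (Xl : Fin n → Ω → H), (∀ l, Measurable (Xl l)) →
        iIndepFun Xl P →
        (∀ l, IdentDistrib (Xl l) X P P) →
      ∀ (I J : Set ℕ),
        (∫ ω, hsNorm u (projSet u I ∘L
            (((n : ℝ)⁻¹ • ∑ l : Fin n, rankOne (Xl l ω)) - T) ∘L projSet u J) ∂P) ^ 2 ≤
          C₂ / n * ∑' i : I, ∑' j : J, lam (i : ℕ) * lam (j : ℕ) := by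
  refine ⟨Cη, hCη, ?_⟩
  intro H _ _ _ _ _ Ω mΩ P hP X hXm hXint hXmean hXsq u lam hlam hmono hsum hcov h4
    T hTsa hTeig n hn Xl hXlm hIndep hIdent I J
  -- RHS nonneg
  have hRHS0 : 0 ≤ Cη / n * ∑' i : I, ∑' j : J, lam (i : ℕ) * lam (j : ℕ) :=
    mul_nonneg (div_nonneg hCη.le (Nat.cast_nonneg n))
      (tsum_nonneg fun i => tsum_nonneg fun j => mul_nonneg (hlam _).le (hlam _).le)
  -- the operator family
  set op : Ω → H →L[ℝ] H :=
    fun ω => (((n : ℝ)⁻¹ • ∑ l : Fin n, rankOne (Xl l ω)) - T) with hop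
  set Sop : Ω → H →L[ℝ] H :=
    fun ω => projSet (⇑u) I ∘L op ω ∘L projSet (⇑u) J with hSop
  -- matrix entries
  set b : ℕ → ℕ → Ω → ℝ := fun i k ω => ⟪(u i : H), op ω (u k)⟫ with hb
  -- the Karhunen-Loève coefficient processes
  set al : Fin n → ℕ → Ω → ℝ := fun l j ω => ⟪(u j : H), Xl l ω⟫ with hal
  set c : ℕ → ℕ → ℝ := fun i k => if i = k then lam i else 0 with hc
  -- formula for b
  have hbformula : ∀ i k ω,
      b i k ω = (n : ℝ)⁻¹ * (∑ l, al l i ω * al l k ω) - c i k := by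
    intro i k ω
    have h1 : op ω (u k)
        = (n : ℝ)⁻¹ • (∑ l, rankOne (Xl l ω)) (u k) - T (u k) := by
      simp [hop]
    have h2 : (∑ l, rankOne (Xl l ω)) (u k) = ∑ l, ⟪Xl l ω, (u k : H)⟫ • Xl l ω := by
      rw [ContinuousLinearMap.sum_apply]
      refine Finset.sum_congr rfl fun l _ => ?_
      simp [rankOne]
    have h3 : ⟪(u i : H), T (u k)⟫ = c i k := by
      rw [hTeig k, inner_smul_right]
      rcases eq_or_ne i k with h | h
      · subst h
        have hni : ⟪(u i : H), (u i : H)⟫ = (1 : ℝ) := by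
          rw [real_inner_self_eq_norm_sq, u.orthonormal.1 i]; norm_num
        simp [hc, hni, u.orthonormal.1 i]
      · have : ⟪(u i : H), (u k : H)⟫ = 0 := u.orthonormal.2 h
        simp [hc, h, this]
    have hLHS : b i k ω
        = (n : ℝ)⁻¹ * (∑ l, ⟪Xl l ω, (u k : H)⟫ * ⟪(u i : H), Xl l ω⟫) - c i k := by
      rw [hb]
      simp only [h1, inner_sub_right, h3, inner_smul_right, h2, inner_sum]
    rw [hLHS]
    congr 2
    exact Finset.sum_congr rfl fun l _ => by
      simp only [hal]
      simp [real_inner_comm, mul_comm]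
  have halm : ∀ l j, Measurable (al l j) := by
    intro l j
    exact ((innerSL ℝ (u j : H)).continuous.measurable).comp (hXlm l)
  have hbmeas : ∀ i k, Measurable (b i k) := by
    intro i k
    have : b i k = fun ω => (n : ℝ)⁻¹ * (∑ l, al l i ω * al l k ω) - c i k := by
      ext ω; exact hbformula i k ω
    rw [this]
    exact (measurable_const.mul (Finset.measurable_sum _
      (fun l _ => (halm l i).mul (halm l k)))).sub measurable_const
  -- a (coefficient of X), and fourth moments
  set a : ℕ → Ω → ℝ := fun j ω => ⟪(u j : H), X ω⟫ with ha
  have ham : ∀ j, Measurable (a j) := fun j =>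
    ((innerSL ℝ (u j : H)).continuous.measurable).comp hXm
  have h4' : ∀ j, Integrable (fun ω => a j ω ^ 4) P ∧ ∫ ω, a j ω ^ 4 ∂P ≤ lam j ^ 2 * Cη :=
    fun j => fourth_moment_from_lintegral (ham j) (hlam j) hCη.le (h4 j)
  -- the key per-entry bound
  have keybound : ∀ i k,
      ∫⁻ ω, ENNReal.ofReal ((b i k ω) ^ 2) ∂P
        ≤ ENNReal.ofReal (lam i * lam k * Cη / n) := by
    intro i k
    -- the scalar functional
    set g : H → ℝ := fun x => ⟪(u i : H), x⟫ * ⟪(u k : H), x⟫ with hg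
    have hgm : Measurable g :=
      ((innerSL ℝ (u i : H)).continuous.measurable).mul
        ((innerSL ℝ (u k : H)).continuous.measurable)
    -- facts about g ∘ X
    have hgXint : Integrable (fun ω => g (X ω)) P := by
      refine Integrable.mono' hXsq (hgm.comp hXm).aestronglyMeasurable
        (Filter.Eventually.of_forall fun ω => ?_)
      rw [Real.norm_eq_abs, hg, abs_mul]
      calc |⟪(u i : H), X ω⟫| * |⟪(u k : H), X ω⟫| ≤ ‖X ω‖ * ‖X ω‖ := by
            apply mul_le_mul
            · simpa [u.orthonormal.1 i] using abs_real_inner_le_norm (u i : H) (X ω)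
            · simpa [u.orthonormal.1 k] using abs_real_inner_le_norm (u k : H) (X ω)
            · positivity
            · positivity
        _ = ‖X ω‖ ^ 2 := by ring
    have hgXmean : ∫ ω, g (X ω) ∂P = c i k := hcov i k
    have hgXsq := prod_sq_bound (ham i) (ham k) (hlam i) (hlam k)
      (h4' i).1 (h4' i).2 (h4' k).1 (h4' k).2
    have hgXsq_int : Integrable (fun ω => g (X ω) ^ 2) P := by
      have := hgXsq.1; simpa [hg, ha] using this
    have hgXsq_bd : ∫ ω, g (X ω) ^ 2 ∂P ≤ lam i * lam k * Cη := by
      have := hgXsq.2; simpa [hg, ha] using this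
    -- transfers to Xl
    have hid : ∀ l, IdentDistrib (fun ω => g (Xl l ω)) (fun ω => g (X ω)) P P :=
      fun l => (hIdent l).comp hgm
    have hid2 : ∀ l, IdentDistrib (fun ω => g (Xl l ω) ^ 2) (fun ω => g (X ω) ^ 2) P P :=
      fun l => (hIdent l).comp ((hgm.pow_const 2))
    have hplint : ∀ l, Integrable (fun ω => g (Xl l ω)) P :=
      fun l => (hid l).integrable_iff.mpr hgXint
    have hplmean : ∀ l, ∫ ω, g (Xl l ω) ∂P = c i k := by
      intro l; rw [(hid l).integral_eq]; exact hgXmean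
    have hplsq_int : ∀ l, Integrable (fun ω => g (Xl l ω) ^ 2) P :=
      fun l => (hid2 l).integrable_iff.mpr hgXsq_int
    have hplsq_bd : ∀ l, ∫ ω, g (Xl l ω) ^ 2 ∂P ≤ lam i * lam k * Cη := by
      intro l; rw [(hid2 l).integral_eq]; exact hgXsq_bd
    have hplmem : ∀ l, MemLp (fun ω => g (Xl l ω)) 2 P := by
      intro l
      exact (memLp_two_iff_integrable_sq
        ((hgm.comp (hXlm l)).aestronglyMeasurable)).mpr (hplsq_int l)
    -- the centered variables
    set Z : Fin n → Ω → ℝ := fun l ω => g (Xl l ω) - c i k with hZ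
    have hZmem : ∀ l, MemLp (Z l) 2 P := fun l => (hplmem l).sub (memLp_const _)
    have hZmean : ∀ l, ∫ ω, Z l ω ∂P = 0 := by
      intro l
      rw [hZ]
      simp only
      rw [integral_sub (hplint l) (integrable_const _), hplmean l]
      simp
    have hZvar : ∀ l, ∫ ω, (Z l ω) ^ 2 ∂P ≤ lam i * lam k * Cη := by
      intro l
      have hexp : ∀ ω, (Z l ω) ^ 2
          = g (Xl l ω) ^ 2 - 2 * c i k * g (Xl l ω) + c i k ^ 2 := by
        intro ω; rw [hZ]; ring
      have hint1 : Integrable (fun ω => g (Xl l ω) ^ 2 - 2 * c i k * g (Xl l ω)) P :=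
        (hplsq_int l).sub ((hplint l).const_mul _)
      calc ∫ ω, (Z l ω) ^ 2 ∂P
          = ∫ ω, (g (Xl l ω) ^ 2 - 2 * c i k * g (Xl l ω) + c i k ^ 2) ∂P := by
            congr 1; ext ω; exact hexp ω
        _ = (∫ ω, (g (Xl l ω) ^ 2 - 2 * c i k * g (Xl l ω)) ∂P) + c i k ^ 2 := by
            rw [integral_add hint1 (integrable_const _)]
            simp
        _ = (∫ ω, g (Xl l ω) ^ 2 ∂P) - 2 * c i k * (∫ ω, g (Xl l ω) ∂P) + c i k ^ 2 := by
            rw [integral_sub (hplsq_int l) ((hplint l).const_mul _), integral_const_mul]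
        _ = (∫ ω, g (Xl l ω) ^ 2 ∂P) - c i k ^ 2 := by
            rw [hplmean l]; ring
        _ ≤ lam i * lam k * Cη := by
            have := hplsq_bd l
            nlinarith [sq_nonneg (c i k)]
    have hZindep : ∀ l l', l ≠ l' → IndepFun (Z l) (Z l') P := by
      intro l l' hll'
      have := hIndep.comp (fun _ => fun y => g y - c i k)
        (fun _ => hgm.sub measurable_const)
      exact this.indepFun hll'
    have hkey := key_var_bound hn hZmem hZmean hZvar hZindep
    -- b = n⁻¹ * ∑ Z
    have hbZ : ∀ ω, b i k ω = (n : ℝ)⁻¹ * ∑ l, Z l ω := by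
      intro ω
      have hsum_eq : ∑ l, al l i ω * al l k ω = ∑ l, g (Xl l ω) :=
        Finset.sum_congr rfl fun l _ => by simp [hal, hg]
      rw [hbformula i k ω, hsum_eq, hZ]
      simp only [Finset.sum_sub_distrib, Finset.sum_const, Finset.card_univ,
        Fintype.card_fin, nsmul_eq_mul]
      have hn' : (n : ℝ) ≠ 0 := Nat.cast_ne_zero.mpr hn.ne'
      field_simp
    -- integrability of b²
    have hWmem : MemLp (fun ω => ∑ l, Z l ω) 2 P := by
      have h := memLp_finset_sum' (μ := P) Finset.univ (fun l (_ : l ∈ Finset.univ) => hZmem l)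
      have he : (fun ω => ∑ l, Z l ω) = ∑ l : Fin n, Z l := by ext ω; simp
      rw [he]; exact h
    have hbsq_int : Integrable (fun ω => (b i k ω) ^ 2) P := by
      have : (fun ω => (b i k ω) ^ 2)
          = fun ω => ((n : ℝ)⁻¹) ^ 2 * (∑ l, Z l ω) ^ 2 := by
        ext ω; rw [hbZ ω]; ring
      rw [this]
      exact hWmem.integrable_sq.const_mul _
    have hbsq_bd : ∫ ω, (b i k ω) ^ 2 ∂P ≤ lam i * lam k * Cη / n := by
      calc ∫ ω, (b i k ω) ^ 2 ∂P
          = ∫ ω, ((n : ℝ)⁻¹ * ∑ l, Z l ω) ^ 2 ∂P := by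
            congr 1; ext ω; rw [hbZ ω]
        _ ≤ lam i * lam k * Cη / n := hkey
    rw [← ofReal_integral_eq_lintegral_ofReal hbsq_int
      (Filter.Eventually.of_forall fun ω => sq_nonneg _)]
    exact ENNReal.ofReal_le_ofReal hbsq_bd
  -- pointwise identity for the HS norm squared
  have hSknorm : ∀ ω k, ‖(Sop ω) (u k)‖ ^ 2
      = J.indicator (fun k => ∑' i, I.indicator (fun i => (b i k ω) ^ 2) i) k := by
    intro ω k
    by_cases hk : k ∈ J
    · rw [Set.indicator_of_mem hk]
      have h1 : Sop ω (u k) = projSet (⇑u) I (op ω (u k)) := by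
        rw [hSop]
        simp only [ContinuousLinearMap.coe_comp', Function.comp_apply]
        rw [projSet_apply_of_mem u hk]
      rw [h1, norm_sq_projSet]
    · rw [Set.indicator_of_notMem hk]
      have h1 : Sop ω (u k) = 0 := by
        rw [hSop]
        simp only [ContinuousLinearMap.coe_comp', Function.comp_apply]
        rw [projSet_apply_of_not_mem u hk]
        simp
      simp [h1]
  -- ENNReal majorant functions
  classical
  set e : ℕ → ℕ → Ω → ℝ≥0∞ := fun k i ω =>
    J.indicator (fun _ => I.indicator (fun i => ENNReal.ofReal ((b i k ω) ^ 2)) i) k with he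
  have hemeas : ∀ k i, Measurable (e k i) := by
    intro k i
    by_cases hk : k ∈ J
    · by_cases hi : i ∈ I
      · have hee : e k i = fun ω => ENNReal.ofReal ((b i k ω) ^ 2) := by
          ext ω; simp [he, Set.indicator_of_mem hk, Set.indicator_of_mem hi]
        rw [hee]
        exact ENNReal.measurable_ofReal.comp ((hbmeas i k).pow_const 2)
      · have hee : e k i = fun _ => 0 := by
          ext ω; simp [he, Set.indicator_of_mem hk, Set.indicator_of_notMem hi]
        rw [hee]; exact measurable_const
    · have hee : e k i = fun _ => 0 := by
        ext ω; simp [he, Set.indicator_of_notMem hk]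
      rw [hee]; exact measurable_const
  -- pointwise bound for ofReal of hsNorm squared
  have hptbound : ∀ ω, ENNReal.ofReal (hsNorm (⇑u) (Sop ω) ^ 2) ≤ ∑' k, ∑' i, e k i ω := by
    intro ω
    have h0 : 0 ≤ hsNormSq (⇑u) (Sop ω) := tsum_nonneg fun i => by positivity
    have h1 : hsNorm (⇑u) (Sop ω) ^ 2 = hsNormSq (⇑u) (Sop ω) := Real.sq_sqrt h0
    rw [h1]
    calc ENNReal.ofReal (hsNormSq (⇑u) (Sop ω))
        ≤ ∑' k, ENNReal.ofReal (‖(Sop ω) (u k)‖ ^ 2) :=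
          ofReal_tsum_le (fun k => by positivity)
      _ ≤ ∑' k, ∑' i, e k i ω := by
          refine ENNReal.tsum_le_tsum fun k => ?_
          rw [hSknorm ω k]
          by_cases hk : k ∈ J
          · rw [Set.indicator_of_mem hk]
            calc ENNReal.ofReal (∑' i, I.indicator (fun i => (b i k ω) ^ 2) i)
                ≤ ∑' i, ENNReal.ofReal (I.indicator (fun i => (b i k ω) ^ 2) i) :=
                  ofReal_tsum_le (fun i => Set.indicator_nonneg (fun i _ => sq_nonneg _) i)
              _ = ∑' i, e k i ω := by
                  refine tsum_congr fun i => ?_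
                  by_cases hi : i ∈ I
                  · simp [he, Set.indicator_of_mem hk, Set.indicator_of_mem hi]
                  · simp [he, Set.indicator_of_mem hk, Set.indicator_of_notMem hi]
          · rw [Set.indicator_of_notMem hk]
            simp
  -- lintegral of each e term
  have helint : ∀ k i, ∫⁻ ω, e k i ω ∂P ≤
      J.indicator (fun k => I.indicator
        (fun i => ENNReal.ofReal (lam i * lam k * Cη / n)) i) k := by
    intro k i
    by_cases hk : k ∈ J
    · by_cases hi : i ∈ I
      · have hee : ∀ ω, e k i ω = ENNReal.ofReal ((b i k ω) ^ 2) := by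
          intro ω; simp [he, Set.indicator_of_mem hk, Set.indicator_of_mem hi]
        rw [Set.indicator_of_mem hk, Set.indicator_of_mem hi]
        calc ∫⁻ ω, e k i ω ∂P = ∫⁻ ω, ENNReal.ofReal ((b i k ω) ^ 2) ∂P := by
              congr 1; ext ω; exact hee ω
          _ ≤ ENNReal.ofReal (lam i * lam k * Cη / n) := keybound i k
      · have hee : ∀ ω, e k i ω = 0 := by
          intro ω; simp [he, Set.indicator_of_mem hk, Set.indicator_of_notMem hi]
        simp [lintegral_congr hee]
    · have hee : ∀ ω, e k i ω = 0 := by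
        intro ω; simp [he, Set.indicator_of_notMem hk]
      simp [lintegral_congr hee]
  -- sums of lambdas
  set SI : ℝ := ∑' (i : I), lam (i : ℕ) with hSI
  set SJ : ℝ := ∑' (j : J), lam (j : ℕ) with hSJ
  have hSI0 : 0 ≤ SI := tsum_nonneg fun i => (hlam _).le
  have hSJ0 : 0 ≤ SJ := tsum_nonneg fun j => (hlam _).le
  have hTS : (∑' i : I, ∑' j : J, lam (i : ℕ) * lam (j : ℕ)) = SI * SJ := by
    calc (∑' i : I, ∑' j : J, lam (i : ℕ) * lam (j : ℕ))
        = ∑' i : I, lam (i : ℕ) * SJ := by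
          exact tsum_congr fun i => tsum_mul_left
      _ = SI * SJ := tsum_mul_right
  have hprod0 : 0 ≤ Cη / n * (SI * SJ) :=
    mul_nonneg (div_nonneg hCη.le (Nat.cast_nonneg n)) (mul_nonneg hSI0 hSJ0)
  have hIE : (∑' (i : ℕ), I.indicator (fun i => ENNReal.ofReal (lam i)) i)
      = ENNReal.ofReal SI := by
    rw [← tsum_subtype I (fun i => ENNReal.ofReal (lam i)), hSI]
    exact (ENNReal.ofReal_tsum_of_nonneg (fun i => (hlam _).le) (hsum.subtype I)).symm
  have hJE : (∑' (k : ℕ), J.indicator (fun k => ENNReal.ofReal (lam k)) k)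
      = ENNReal.ofReal SJ := by
    rw [← tsum_subtype J (fun k => ENNReal.ofReal (lam k)), hSJ]
    exact (ENNReal.ofReal_tsum_of_nonneg (fun k => (hlam _).le) (hsum.subtype J)).symm
  set D : ℝ≥0∞ := ENNReal.ofReal (Cη / n) with hD
  have hfact : ∀ k i, J.indicator (fun k => I.indicator
      (fun i => ENNReal.ofReal (lam i * lam k * Cη / n)) i) k
      = J.indicator (fun k => ENNReal.ofReal (lam k)) k
        * (I.indicator (fun i => ENNReal.ofReal (lam i)) i * D) := by
    intro k i
    by_cases hk : k ∈ J
    · by_cases hi : i ∈ I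
      · rw [Set.indicator_of_mem hk, Set.indicator_of_mem hk, Set.indicator_of_mem hi,
          Set.indicator_of_mem hi, hD, ← ENNReal.ofReal_mul (hlam i).le,
          ← ENNReal.ofReal_mul (hlam k).le]
        congr 1
        field_simp
      · rw [Set.indicator_of_mem hk, Set.indicator_of_mem hk, Set.indicator_of_notMem hi,
          Set.indicator_of_notMem hi]
        simp
    · rw [Set.indicator_of_notMem hk, Set.indicator_of_notMem hk]
      simp
  have htotal : (∑' (k : ℕ), ∑' (i : ℕ), J.indicator (fun k => I.indicator
      (fun i => ENNReal.ofReal (lam i * lam k * Cη / n)) i) k)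
      = ENNReal.ofReal (Cη / n * (SI * SJ)) := by
    calc (∑' (k : ℕ), ∑' (i : ℕ), J.indicator (fun k => I.indicator
        (fun i => ENNReal.ofReal (lam i * lam k * Cη / n)) i) k)
        = ∑' (k : ℕ), ∑' (i : ℕ), J.indicator (fun k => ENNReal.ofReal (lam k)) k
            * (I.indicator (fun i => ENNReal.ofReal (lam i)) i * D) := by
          exact tsum_congr fun k => tsum_congr fun i => hfact k i
      _ = ∑' (k : ℕ), J.indicator (fun k => ENNReal.ofReal (lam k)) k
            * ((∑' (i : ℕ), I.indicator (fun i => ENNReal.ofReal (lam i)) i) * D) := by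
          refine tsum_congr fun k => ?_
          rw [ENNReal.tsum_mul_left]
          congr 1
          exact ENNReal.tsum_mul_right
      _ = (∑' (k : ℕ), J.indicator (fun k => ENNReal.ofReal (lam k)) k)
            * ((∑' (i : ℕ), I.indicator (fun i => ENNReal.ofReal (lam i)) i) * D) :=
          ENNReal.tsum_mul_right
      _ = ENNReal.ofReal (Cη / n * (SI * SJ)) := by
          rw [hIE, hJE, hD, ← ENNReal.ofReal_mul hSI0, ← ENNReal.ofReal_mul hSJ0]
          congr 1
          ring
  -- main case split on integrability
  by_cases hInt : Integrable (fun ω => hsNorm (⇑u) (Sop ω)) P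
  · -- the integrable case
    have hnonneg : 0 ≤ᵐ[P] fun ω => hsNorm (⇑u) (Sop ω) :=
      Filter.Eventually.of_forall fun ω => Real.sqrt_nonneg _
    have hieq : ∫ ω, hsNorm (⇑u) (Sop ω) ∂P
        = (∫⁻ ω, ENNReal.ofReal (hsNorm (⇑u) (Sop ω)) ∂P).toReal :=
      integral_eq_lintegral_of_nonneg_ae hnonneg hInt.aestronglyMeasurable
    set L : ℝ≥0∞ := ∫⁻ ω, ENNReal.ofReal (hsNorm (⇑u) (Sop ω)) ∂P with hL
    set B : ℝ≥0∞ := ENNReal.ofReal (Cη / n * (SI * SJ)) with hB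
    have hfm : AEMeasurable (fun ω => ENNReal.ofReal (hsNorm (⇑u) (Sop ω))) P :=
      ENNReal.measurable_ofReal.comp_aemeasurable hInt.aestronglyMeasurable.aemeasurable
    have hconj : Real.HolderConjugate 2 2 := Real.HolderConjugate.two_two
    have hholder : L ≤ (∫⁻ ω, ENNReal.ofReal (hsNorm (⇑u) (Sop ω)) ^ (2:ℝ) ∂P) ^ (1/(2:ℝ)) := by
      have h := ENNReal.lintegral_mul_le_Lp_mul_Lq P hconj hfm
        (aemeasurable_const : AEMeasurable (fun _ : Ω => (1 : ℝ≥0∞)) P)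
      simpa [hL] using h
    have hsq_lint : (∫⁻ ω, ENNReal.ofReal (hsNorm (⇑u) (Sop ω)) ^ (2:ℝ) ∂P) ≤ B := by
      calc (∫⁻ ω, ENNReal.ofReal (hsNorm (⇑u) (Sop ω)) ^ (2:ℝ) ∂P)
          = ∫⁻ ω, ENNReal.ofReal (hsNorm (⇑u) (Sop ω) ^ 2) ∂P := by
            congr 1; ext ω
            rw [ENNReal.ofReal_rpow_of_nonneg (x := hsNorm (⇑u) (Sop ω)) (Real.sqrt_nonneg _) (by norm_num)]
            congr 1
            rw [← Real.rpow_natCast (hsNorm (⇑u) (Sop ω)) 2]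
            norm_num
        _ ≤ ∫⁻ ω, (∑' k, ∑' i, e k i ω) ∂P := lintegral_mono fun ω => hptbound ω
        _ = ∑' k, ∑' i, ∫⁻ ω, e k i ω ∂P := by
            rw [lintegral_tsum
              (fun k => (Measurable.ennreal_tsum (fun i => hemeas k i)).aemeasurable)]
            exact tsum_congr fun k => lintegral_tsum fun i => (hemeas k i).aemeasurable
        _ ≤ ∑' (k : ℕ), ∑' (i : ℕ), J.indicator (fun k => I.indicator
              (fun i => ENNReal.ofReal (lam i * lam k * Cη / n)) i) k :=
            ENNReal.tsum_le_tsum fun k => ENNReal.tsum_le_tsum fun i => helint k i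
        _ = B := by rw [htotal, hB]
    have hLle : L ≤ B ^ (1/(2:ℝ)) :=
      hholder.trans (ENNReal.rpow_le_rpow hsq_lint (by norm_num))
    have hBhne : B ^ (1/(2:ℝ)) ≠ ⊤ :=
      ENNReal.rpow_ne_top_of_nonneg (by norm_num) (by rw [hB]; exact ENNReal.ofReal_ne_top)
    have h1 : (L.toReal) ^ 2 ≤ ((B ^ (1/(2:ℝ))).toReal) ^ 2 :=
      pow_le_pow_left₀ ENNReal.toReal_nonneg (ENNReal.toReal_mono hBhne hLle) 2
    have hBr : ((B ^ (1/(2:ℝ))).toReal) ^ 2 = Cη / n * (SI * SJ) := by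
      rw [← ENNReal.toReal_rpow, hB, ENNReal.toReal_ofReal hprod0,
        ← Real.rpow_natCast ((Cη / n * (SI * SJ)) ^ (1/(2:ℝ))) 2,
        ← Real.rpow_mul hprod0]
      norm_num
    show (∫ ω, hsNorm (⇑u) (Sop ω) ∂P) ^ 2 ≤ Cη / ↑n * ∑' i : I, ∑' j : J, lam (i : ℕ) * lam (j : ℕ)
    rw [hieq, hTS]
    rw [← hBr]
    exact h1
  · -- the non-integrable case : the integral is 0
    show (∫ ω, hsNorm (⇑u) (Sop ω) ∂P) ^ 2 ≤ Cη / ↑n * ∑' i : I, ∑' j : J, lam (i : ℕ) * lam (j : ℕ)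
    rw [integral_undef hInt]
    simpa using hRHS0
end
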